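/- Let $a<b$ and let $g:[a,b]\to\mathbb{R}$ be continuous with $g(t)>0$ for all $t$. If $w:[a,b]\to\mathbb{R}$ is continuous and is a viscosity solution of $|w'|=g$ on $(a,b)$, then there exists $\bar t\in[a,b]$ such that for every $t\in(a,b)$ with $t<\bar t$ the function $w$ is differentiable at $t$ with $w'(t)=g(t)$, and for every $t\in(a,b)$ with $t>\bar t$ the function $w$ is differentiable at $t$ with $w'(t)=-g(t)$. In particular, $w$ is not differentiable at at most one point of $(a,b)$, and $|w'(t)|=g(t)$ for almost every $t\in(a,b)$. -/

import Mathlib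

open MeasureTheory

/-- `w` is a viscosity subsolution of `|w'| = g` on `(a,b)`. -/
def ViscositySubsolution (a b : ℝ) (g w : ℝ → ℝ) : Prop :=
  ∀ t0 ∈ Set.Ioo a b, ∀ φ : ℝ → ℝ, Differentiable ℝ φ →
    IsLocalMax (fun t => w t - φ t) t0 → |deriv φ t0| ≤ g t0

/-- `w` is a viscosity supersolution of `|w'| = g` on `(a,b)`. -/
def ViscositySupersolution (a b : ℝ) (g w : ℝ → ℝ) : Prop :=
  ∀ t0 ∈ Set.Ioo a b, ∀ φ : ℝ → ℝ, Differentiable ℝ φ →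
    IsLocalMin (fun t => w t - φ t) t0 → g t0 ≤ |deriv φ t0|

open Set Filter Topology

section Aux

lemma near_pt_left {F : ℝ → ℝ} {y : ℝ} (hF : ContinuousAt F y) {S : Set ℝ}
    (hS : IsOpen S) (hFy : F y ∈ S) {x : ℝ} (hxy : x < y) :
    ∃ t1 ∈ Ioo x y, F t1 ∈ S := by
  have h1 : ∀ᶠ t in 𝓝[<] y, F t ∈ S :=
    (hF.eventually_mem (hS.mem_nhds hFy)).filter_mono nhdsWithin_le_nhds
  have h2 : Ioo x y ∈ 𝓝[<] y := Ioo_mem_nhdsLT_of_mem ⟨hxy, le_refl y⟩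
  obtain ⟨t1, ht1, ht2⟩ := (h1.and h2).exists
  exact ⟨t1, ht2, ht1⟩

lemma near_pt_right {F : ℝ → ℝ} {x : ℝ} (hF : ContinuousAt F x) {S : Set ℝ}
    (hS : IsOpen S) (hFx : F x ∈ S) {y : ℝ} (hxy : x < y) :
    ∃ t1 ∈ Ioo x y, F t1 ∈ S := by
  have h1 : ∀ᶠ t in 𝓝[>] x, F t ∈ S :=
    (hF.eventually_mem (hS.mem_nhds hFx)).filter_mono nhdsWithin_le_nhds
  have h2 : Ioo x y ∈ 𝓝[>] x := Ioo_mem_nhdsGT_of_mem ⟨le_refl x, hxy⟩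
  obtain ⟨t1, ht1, ht2⟩ := (h1.and h2).exists
  exact ⟨t1, ht2, ht1⟩

lemma barrier_hasDerivAt (c σ t : ℝ) (hσ : σ ≠ 0) :
    HasDerivAt (fun s => ((s - c)^2 + σ^2)⁻¹) (-(2*(t-c)) / (((t-c)^2+σ^2)^2)) t := by
  have h1 : HasDerivAt (fun s => (s - c)^2 + σ^2) (2*(t-c)) t := by
    have := ((hasDerivAt_id t).sub_const c).pow 2
    simpa using this.add_const (σ^2)
  have hne : (t - c)^2 + σ^2 ≠ 0 := by positivity
  exact h1.inv hne

lemma not_localMin_deriv_neg {w φ : ℝ → ℝ} {x y t0 d : ℝ} (ht0 : t0 ∈ Ioo x y)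
    (hmin : IsLocalMin (fun t => w t - φ t) t0) (hd : HasDerivAt φ d t0)
    (hneg : d < 0) (hmono : MonotoneOn w (Icc x y)) : False := by
  have hslope : Tendsto (slope φ t0) (𝓝[≠] t0) (𝓝 d) :=
    hasDerivAt_iff_tendsto_slope.mp hd
  have h1 : ∀ᶠ t in 𝓝[<] t0, slope φ t0 t < d / 2 := by
    have : ∀ᶠ t in 𝓝[≠] t0, slope φ t0 t < d / 2 :=
      hslope (Iio_mem_nhds (by linarith))
    exact this.filter_mono (nhdsWithin_mono _ fun t ht => ne_of_lt ht)
  have h2 : ∀ᶠ t in 𝓝[<] t0, w t - φ t ≥ w t0 - φ t0 :=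
    hmin.filter_mono nhdsWithin_le_nhds
  have h3 : ∀ᶠ t in 𝓝[<] t0, t ∈ Ioo x y :=
    eventually_nhdsWithin_of_eventually_nhds (Ioo_mem_nhds ht0.1 ht0.2)
  have h4 : ∀ᶠ t in 𝓝[<] t0, t < t0 := eventually_mem_nhdsWithin
  obtain ⟨t, ⟨⟨hs, hge⟩, htI⟩, hlt⟩ := (((h1.and h2).and h3).and h4).exists
  have hφ : φ t0 < φ t := by
    have hs' : (φ t - φ t0) / (t - t0) < d / 2 := by
      simpa [slope_def_field, div_eq_iff, sub_ne_zero] using hs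
    have htne : t - t0 < 0 := by linarith
    have hs'' : (d/2) * (t - t0) < φ t - φ t0 := (div_lt_iff_of_neg htne).mp hs'
    nlinarith [mul_pos_of_neg_of_neg (show d/2 < 0 by linarith) htne]
  have hw1 : w t0 < w t := by
    simp only [ge_iff_le] at hge; linarith
  have hw2 : w t ≤ w t0 := hmono ⟨htI.1.le, htI.2.le⟩ ⟨ht0.1.le, ht0.2.le⟩ hlt.le
  linarith

lemma not_localMin_deriv_pos {w φ : ℝ → ℝ} {x y t0 d : ℝ} (ht0 : t0 ∈ Ioo x y)
    (hmin : IsLocalMin (fun t => w t - φ t) t0) (hd : HasDerivAt φ d t0)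
    (hpos : 0 < d) (hanti : AntitoneOn w (Icc x y)) : False := by
  have hslope : Tendsto (slope φ t0) (𝓝[≠] t0) (𝓝 d) :=
    hasDerivAt_iff_tendsto_slope.mp hd
  have h1 : ∀ᶠ t in 𝓝[>] t0, slope φ t0 t > d / 2 := by
    have : ∀ᶠ t in 𝓝[≠] t0, slope φ t0 t > d / 2 :=
      hslope (Ioi_mem_nhds (by linarith))
    exact this.filter_mono (nhdsWithin_mono _ fun t ht => ne_of_gt ht)
  have h2 : ∀ᶠ t in 𝓝[>] t0, w t - φ t ≥ w t0 - φ t0 :=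
    hmin.filter_mono nhdsWithin_le_nhds
  have h3 : ∀ᶠ t in 𝓝[>] t0, t ∈ Ioo x y :=
    eventually_nhdsWithin_of_eventually_nhds (Ioo_mem_nhds ht0.1 ht0.2)
  have h4 : ∀ᶠ t in 𝓝[>] t0, t0 < t := eventually_mem_nhdsWithin
  obtain ⟨t, ⟨⟨hs, hge⟩, htI⟩, hlt⟩ := (((h1.and h2).and h3).and h4).exists
  have hφ : φ t0 < φ t := by
    have hs' : (φ t - φ t0) / (t - t0) > d / 2 := by
      simpa [slope_def_field] using hs
    have htne : 0 < t - t0 := by linarith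
    have hs'' : (d/2) * (t - t0) < φ t - φ t0 := (lt_div_iff₀ htne).mp hs'
    nlinarith [mul_pos (show (0:ℝ) < d/2 by linarith) htne]
  have hw1 : w t0 < w t := by
    simp only [ge_iff_le] at hge; linarith
  have hw2 : w t ≤ w t0 := hanti ⟨ht0.1.le, ht0.2.le⟩ ⟨htI.1.le, htI.2.le⟩ hlt.le
  linarith

lemma sub_upper {a b : ℝ} {g w G gE : ℝ → ℝ}
    (hG : ∀ t, HasDerivAt G (gE t) t) (hgE : ∀ t ∈ Icc a b, gE t = g t)
    (hw : ContinuousOn w (Icc a b)) (hsub : ViscositySubsolution a b g w)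
    {x y : ℝ} (hx : x ∈ Ioo a b) (hy : y ∈ Ioo a b) (hxy : x < y) :
    w y - w x ≤ G y - G x := by
  by_contra hcon
  push_neg at hcon
  have hyx : 0 < y - x := by linarith
  set ε : ℝ := ((w y - w x) - (G y - G x)) / (2*(y-x)) with hεdef
  have hεpos : 0 < ε := div_pos (by linarith) (by linarith)
  obtain ⟨F, hFdef⟩ : ∃ F : ℝ → ℝ, F = fun t => w t - G t - ε * t := ⟨_, rfl⟩
  have hkey : ε * (y - x) = ((w y - w x) - (G y - G x)) / 2 := by
    rw [hεdef]; field_simp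
  have hFxy : F x < F y := by
    simp only [hFdef]
    nlinarith [hkey]
  clear_value ε
  set m : ℝ := (F x + F y) / 2 with hmdef
  have hm1 : F x < m := by simp only [hmdef]; linarith
  have hm2 : m < F y := by simp only [hmdef]; linarith
  clear_value m
  have hGdiff : Differentiable ℝ G := fun t => (hG t).differentiableAt
  have hGc : Continuous G := hGdiff.continuous
  have hwy : ContinuousAt w y := hw.continuousAt (Icc_mem_nhds hy.1 hy.2)
  have hFy : ContinuousAt F y := by
    rw [hFdef]
    exact (hwy.sub hGc.continuousAt).sub ((continuous_const.mul continuous_id).continuousAt)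
  obtain ⟨t1, ht1, hFt1⟩ := near_pt_left hFy isOpen_Ioi hm2 hxy
  rw [mem_Ioi] at hFt1
  have hyt1 : 0 < y - t1 := by linarith [ht1.2]
  set δ : ℝ := (F t1 - m) * (y - t1)^2 / 2 with hδdef
  have hδpos : 0 < δ := by
    apply div_pos (mul_pos (by linarith) (by positivity)) two_pos
  have hδval : δ * ((y - t1)^2)⁻¹ = (F t1 - m) / 2 := by
    rw [hδdef]; field_simp
  clear_value δ
  set σ : ℝ := Real.sqrt (δ / (4*(F y - m))) with hσdef
  have hFym : 0 < F y - m := by linarith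
  have hσsq : σ^2 = δ / (4*(F y - m)) := by
    rw [hσdef, Real.sq_sqrt (le_of_lt (div_pos hδpos (by linarith)))]
  have hσpos : 0 < σ := Real.sqrt_pos.mpr (div_pos hδpos (by linarith))
  clear_value σ
  obtain ⟨B, hBdef⟩ : ∃ B : ℝ → ℝ, B = fun t => ((t - y)^2 + σ^2)⁻¹ := ⟨_, rfl⟩
  have hBpos : ∀ t, 0 < B t := fun t => by
    simp only [hBdef]; positivity
  obtain ⟨Ψ, hΨdef⟩ : ∃ P : ℝ → ℝ, P = fun t => F t - δ * B t := ⟨_, rfl⟩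
  have hΨx : Ψ x < m := by
    have := mul_pos hδpos (hBpos x)
    simp only [hΨdef]; linarith
  have hΨy : Ψ y < m := by
    have hBy : B y = (σ^2)⁻¹ := by simp [hBdef]
    have : δ * B y = 4*(F y - m) := by
      rw [hBy, hσsq]
      field_simp
    simp only [hΨdef]
    rw [this]; linarith
  have hΨt1 : m < Ψ t1 := by
    have hb1 : B t1 ≤ ((y - t1)^2)⁻¹ := by
      simp only [hBdef]
      apply inv_anti₀ (by positivity)
      nlinarith
    have hb2 : δ * B t1 ≤ δ * ((y - t1)^2)⁻¹ :=
      mul_le_mul_of_nonneg_left hb1 hδpos.le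
    simp only [hΨdef]
    rw [hδval] at hb2
    linarith
  have hIccsub : Icc x y ⊆ Icc a b := Icc_subset_Icc hx.1.le hy.2.le
  have hBc : Continuous B := by
    rw [hBdef]
    exact Continuous.inv₀ (((continuous_id.sub continuous_const).pow 2).add continuous_const)
      (fun t => by positivity)
  have hΨcont : ContinuousOn Ψ (Icc x y) := by
    simp only [hΨdef, hFdef]
    exact (((hw.mono hIccsub).sub hGc.continuousOn).sub
      ((continuous_const.mul continuous_id).continuousOn)).sub
      ((continuous_const.mul hBc).continuousOn)
  obtain ⟨t0, ht0mem, ht0max⟩ := isCompact_Icc.exists_isMaxOn (nonempty_Icc.mpr hxy.le) hΨcont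
  have hmax1 : m < Ψ t0 := lt_of_lt_of_le hΨt1 (ht0max ⟨ht1.1.le, ht1.2.le⟩)
  have ht0I : t0 ∈ Ioo x y := by
    rcases eq_or_lt_of_le ht0mem.1 with h | h
    · exfalso; rw [h] at hΨx; linarith
    rcases eq_or_lt_of_le ht0mem.2 with h2 | h2
    · exfalso; rw [h2] at hmax1; linarith
    exact ⟨h, h2⟩
  obtain ⟨φ, hφdef⟩ : ∃ p : ℝ → ℝ, p = fun t => G t + ε * t + δ * B t := ⟨_, rfl⟩
  have hφd : ∀ t, HasDerivAt φ (gE t + ε + δ * (-(2*(t-y)) / (((t-y)^2+σ^2)^2))) t := by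
    intro t
    have h := ((hG t).add ((hasDerivAt_id t).const_mul ε)).add
      ((barrier_hasDerivAt y σ t hσpos.ne').const_mul δ)
    simp only [hφdef, hBdef]
    exact h.congr_deriv (by ring)
  have hφdiff : Differentiable ℝ φ := fun t => (hφd t).differentiableAt
  have hloc : IsLocalMax (fun t => w t - φ t) t0 := by
    have heq : (fun t => w t - φ t) = Ψ := by
      funext t; simp only [hΨdef, hφdef, hFdef, hBdef]; ring
    rw [heq]
    exact ht0max.isLocalMax (Icc_mem_nhds ht0I.1 ht0I.2)
  have ht0ab : t0 ∈ Ioo a b := ⟨hx.1.trans ht0I.1, ht0I.2.trans hy.2⟩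
  have habs := hsub t0 ht0ab φ hφdiff hloc
  rw [(hφd t0).deriv] at habs
  have hgEt0 : gE t0 = g t0 := hgE t0 ⟨ht0ab.1.le, ht0ab.2.le⟩
  rw [hgEt0] at habs
  have hBdpos : 0 < -(2*(t0-y)) / (((t0-y)^2+σ^2)^2) := by
    apply div_pos (by linarith [ht0I.2]) (by positivity)
  have hle := le_abs_self (g t0 + ε + δ * (-(2*(t0-y)) / (((t0-y)^2+σ^2)^2)))
  linarith [mul_pos hδpos hBdpos]

lemma sub_lower {a b : ℝ} {g w G gE : ℝ → ℝ}
    (hG : ∀ t, HasDerivAt G (gE t) t) (hgE : ∀ t ∈ Icc a b, gE t = g t)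
    (hw : ContinuousOn w (Icc a b)) (hsub : ViscositySubsolution a b g w)
    {x y : ℝ} (hx : x ∈ Ioo a b) (hy : y ∈ Ioo a b) (hxy : x < y) :
    w x - w y ≤ G y - G x := by
  by_contra hcon
  push_neg at hcon
  have hyx : 0 < y - x := by linarith
  set ε : ℝ := ((w x - w y) - (G y - G x)) / (2*(y-x)) with hεdef
  have hεpos : 0 < ε := div_pos (by linarith) (by linarith)
  obtain ⟨F, hFdef⟩ : ∃ F : ℝ → ℝ, F = fun t => w t + G t + ε * t := ⟨_, rfl⟩
  have hkey : ε * (y - x) = ((w x - w y) - (G y - G x)) / 2 := by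
    rw [hεdef]; field_simp
  have hFxy : F y < F x := by
    simp only [hFdef]
    nlinarith [hkey]
  clear_value ε
  set m : ℝ := (F x + F y) / 2 with hmdef
  have hm1 : F y < m := by simp only [hmdef]; linarith
  have hm2 : m < F x := by simp only [hmdef]; linarith
  clear_value m
  have hGdiff : Differentiable ℝ G := fun t => (hG t).differentiableAt
  have hGc : Continuous G := hGdiff.continuous
  have hwx : ContinuousAt w x := hw.continuousAt (Icc_mem_nhds hx.1 hx.2)
  have hFx : ContinuousAt F x := by
    rw [hFdef]
    exact (hwx.add hGc.continuousAt).add ((continuous_const.mul continuous_id).continuousAt)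
  obtain ⟨t1, ht1, hFt1⟩ := near_pt_right hFx isOpen_Ioi hm2 hxy
  rw [mem_Ioi] at hFt1
  have hxt1 : 0 < t1 - x := by linarith [ht1.1]
  set δ : ℝ := (F t1 - m) * (t1 - x)^2 / 2 with hδdef
  have hδpos : 0 < δ := by
    apply div_pos (mul_pos (by linarith) (by positivity)) two_pos
  have hδval : δ * ((t1 - x)^2)⁻¹ = (F t1 - m) / 2 := by
    rw [hδdef]; field_simp
  clear_value δ
  set σ : ℝ := Real.sqrt (δ / (4*(F x - m))) with hσdef
  have hFxm : 0 < F x - m := by linarith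
  have hσsq : σ^2 = δ / (4*(F x - m)) := by
    rw [hσdef, Real.sq_sqrt (le_of_lt (div_pos hδpos (by linarith)))]
  have hσpos : 0 < σ := Real.sqrt_pos.mpr (div_pos hδpos (by linarith))
  clear_value σ
  obtain ⟨B, hBdef⟩ : ∃ B : ℝ → ℝ, B = fun t => ((t - x)^2 + σ^2)⁻¹ := ⟨_, rfl⟩
  have hBpos : ∀ t, 0 < B t := fun t => by
    simp only [hBdef]; positivity
  obtain ⟨Ψ, hΨdef⟩ : ∃ P : ℝ → ℝ, P = fun t => F t - δ * B t := ⟨_, rfl⟩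
  have hΨy : Ψ y < m := by
    have := mul_pos hδpos (hBpos y)
    simp only [hΨdef]; linarith
  have hΨx : Ψ x < m := by
    have hBx : B x = (σ^2)⁻¹ := by simp [hBdef]
    have : δ * B x = 4*(F x - m) := by
      rw [hBx, hσsq]
      field_simp
    simp only [hΨdef]
    rw [this]; linarith
  have hΨt1 : m < Ψ t1 := by
    have hb1 : B t1 ≤ ((t1 - x)^2)⁻¹ := by
      simp only [hBdef]
      apply inv_anti₀ (by positivity)
      nlinarith
    have hb2 : δ * B t1 ≤ δ * ((t1 - x)^2)⁻¹ :=
      mul_le_mul_of_nonneg_left hb1 hδpos.le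
    simp only [hΨdef]
    rw [hδval] at hb2
    linarith
  have hIccsub : Icc x y ⊆ Icc a b := Icc_subset_Icc hx.1.le hy.2.le
  have hBc : Continuous B := by
    rw [hBdef]
    exact Continuous.inv₀ (((continuous_id.sub continuous_const).pow 2).add continuous_const)
      (fun t => by positivity)
  have hΨcont : ContinuousOn Ψ (Icc x y) := by
    simp only [hΨdef, hFdef]
    exact (((hw.mono hIccsub).add hGc.continuousOn).add
      ((continuous_const.mul continuous_id).continuousOn)).sub
      ((continuous_const.mul hBc).continuousOn)
  obtain ⟨t0, ht0mem, ht0max⟩ := isCompact_Icc.exists_isMaxOn (nonempty_Icc.mpr hxy.le) hΨcont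
  have hmax1 : m < Ψ t0 := lt_of_lt_of_le hΨt1 (ht0max ⟨ht1.1.le, ht1.2.le⟩)
  have ht0I : t0 ∈ Ioo x y := by
    rcases eq_or_lt_of_le ht0mem.1 with h | h
    · exfalso; rw [h] at hΨx; linarith
    rcases eq_or_lt_of_le ht0mem.2 with h2 | h2
    · exfalso; rw [h2] at hmax1; linarith
    exact ⟨h, h2⟩
  obtain ⟨φ, hφdef⟩ : ∃ p : ℝ → ℝ, p = fun t => -G t - ε * t + δ * B t := ⟨_, rfl⟩
  have hφd : ∀ t, HasDerivAt φ (-(gE t) - ε + δ * (-(2*(t-x)) / (((t-x)^2+σ^2)^2))) t := by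
    intro t
    have h := (((hG t).neg).sub ((hasDerivAt_id t).const_mul ε)).add
      ((barrier_hasDerivAt x σ t hσpos.ne').const_mul δ)
    simp only [hφdef, hBdef]
    exact h.congr_deriv (by ring)
  have hφdiff : Differentiable ℝ φ := fun t => (hφd t).differentiableAt
  have hloc : IsLocalMax (fun t => w t - φ t) t0 := by
    have heq : (fun t => w t - φ t) = Ψ := by
      funext t; simp only [hΨdef, hφdef, hFdef, hBdef]; ring
    rw [heq]
    exact ht0max.isLocalMax (Icc_mem_nhds ht0I.1 ht0I.2)
  have ht0ab : t0 ∈ Ioo a b := ⟨hx.1.trans ht0I.1, ht0I.2.trans hy.2⟩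
  have habs := hsub t0 ht0ab φ hφdiff hloc
  rw [(hφd t0).deriv] at habs
  have hgEt0 : gE t0 = g t0 := hgE t0 ⟨ht0ab.1.le, ht0ab.2.le⟩
  rw [hgEt0] at habs
  have hBdneg : -(2*(t0-x)) / (((t0-x)^2+σ^2)^2) < 0 := by
    apply div_neg_of_neg_of_pos (by linarith [ht0I.1]) (by positivity)
  have hle := neg_abs_le (-(g t0) - ε + δ * (-(2*(t0-x)) / (((t0-x)^2+σ^2)^2)))
  linarith [mul_neg_of_pos_of_neg hδpos hBdneg]

lemma super_incr {a b : ℝ} {g w G gE : ℝ → ℝ}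
    (hG : ∀ t, HasDerivAt G (gE t) t) (hgE : ∀ t ∈ Icc a b, gE t = g t)
    (hw : ContinuousOn w (Icc a b)) (hsuper : ViscositySupersolution a b g w)
    {x y : ℝ} (hx : x ∈ Ioo a b) (hy : y ∈ Ioo a b) (hxy : x < y)
    (hmono : MonotoneOn w (Icc x y)) :
    G y - G x ≤ w y - w x := by
  by_contra hcon
  push_neg at hcon
  have hyx : 0 < y - x := by linarith
  set ε : ℝ := ((G y - G x) - (w y - w x)) / (2*(y-x)) with hεdef
  have hεpos : 0 < ε := div_pos (by linarith) (by linarith)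
  obtain ⟨F, hFdef⟩ : ∃ F : ℝ → ℝ, F = fun t => w t - G t + ε * t := ⟨_, rfl⟩
  have hkey : ε * (y - x) = ((G y - G x) - (w y - w x)) / 2 := by
    rw [hεdef]; field_simp
  have hFxy : F y < F x := by
    simp only [hFdef]
    nlinarith [hkey]
  clear_value ε
  set m : ℝ := (F x + F y) / 2 with hmdef
  have hm1 : F y < m := by simp only [hmdef]; linarith
  have hm2 : m < F x := by simp only [hmdef]; linarith
  clear_value m
  have hGdiff : Differentiable ℝ G := fun t => (hG t).differentiableAt
  have hGc : Continuous G := hGdiff.continuous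
  have hwy : ContinuousAt w y := hw.continuousAt (Icc_mem_nhds hy.1 hy.2)
  have hFy : ContinuousAt F y := by
    rw [hFdef]
    exact (hwy.sub hGc.continuousAt).add ((continuous_const.mul continuous_id).continuousAt)
  obtain ⟨t1, ht1, hFt1⟩ := near_pt_left hFy isOpen_Iio hm1 hxy
  rw [mem_Iio] at hFt1
  have hyt1 : 0 < y - t1 := by linarith [ht1.2]
  set δ : ℝ := (m - F t1) * (y - t1)^2 / 2 with hδdef
  have hδpos : 0 < δ := by
    apply div_pos (mul_pos (by linarith) (by positivity)) two_pos
  have hδval : δ * ((y - t1)^2)⁻¹ = (m - F t1) / 2 := by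
    rw [hδdef]; field_simp
  clear_value δ
  set σ : ℝ := Real.sqrt (δ / (4*(m - F y))) with hσdef
  have hFym : 0 < m - F y := by linarith
  have hσsq : σ^2 = δ / (4*(m - F y)) := by
    rw [hσdef, Real.sq_sqrt (le_of_lt (div_pos hδpos (by linarith)))]
  have hσpos : 0 < σ := Real.sqrt_pos.mpr (div_pos hδpos (by linarith))
  clear_value σ
  obtain ⟨B, hBdef⟩ : ∃ B : ℝ → ℝ, B = fun t => ((t - y)^2 + σ^2)⁻¹ := ⟨_, rfl⟩
  have hBpos : ∀ t, 0 < B t := fun t => by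
    simp only [hBdef]; positivity
  obtain ⟨Ψ, hΨdef⟩ : ∃ P : ℝ → ℝ, P = fun t => F t + δ * B t := ⟨_, rfl⟩
  have hΨx : m < Ψ x := by
    have := mul_pos hδpos (hBpos x)
    simp only [hΨdef]; linarith
  have hΨy : m < Ψ y := by
    have hBy : B y = (σ^2)⁻¹ := by simp [hBdef]
    have : δ * B y = 4*(m - F y) := by
      rw [hBy, hσsq]
      field_simp
    simp only [hΨdef]
    rw [this]; linarith
  have hΨt1 : Ψ t1 < m := by
    have hb1 : B t1 ≤ ((y - t1)^2)⁻¹ := by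
      simp only [hBdef]
      apply inv_anti₀ (by positivity)
      nlinarith
    have hb2 : δ * B t1 ≤ δ * ((y - t1)^2)⁻¹ :=
      mul_le_mul_of_nonneg_left hb1 hδpos.le
    simp only [hΨdef]
    rw [hδval] at hb2
    linarith
  have hIccsub : Icc x y ⊆ Icc a b := Icc_subset_Icc hx.1.le hy.2.le
  have hBc : Continuous B := by
    rw [hBdef]
    exact Continuous.inv₀ (((continuous_id.sub continuous_const).pow 2).add continuous_const)
      (fun t => by positivity)
  have hΨcont : ContinuousOn Ψ (Icc x y) := by
    simp only [hΨdef, hFdef]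
    exact (((hw.mono hIccsub).sub hGc.continuousOn).add
      ((continuous_const.mul continuous_id).continuousOn)).add
      ((continuous_const.mul hBc).continuousOn)
  obtain ⟨t0, ht0mem, ht0min⟩ := isCompact_Icc.exists_isMinOn (nonempty_Icc.mpr hxy.le) hΨcont
  have hmin1 : Ψ t0 < m := lt_of_le_of_lt (ht0min ⟨ht1.1.le, ht1.2.le⟩) hΨt1
  have ht0I : t0 ∈ Ioo x y := by
    rcases eq_or_lt_of_le ht0mem.1 with h | h
    · exfalso; rw [h] at hΨx; linarith
    rcases eq_or_lt_of_le ht0mem.2 with h2 | h2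
    · exfalso; rw [h2] at hmin1; linarith
    exact ⟨h, h2⟩
  obtain ⟨φ, hφdef⟩ : ∃ p : ℝ → ℝ, p = fun t => G t - ε * t - δ * B t := ⟨_, rfl⟩
  have hφd : ∀ t, HasDerivAt φ (gE t - ε - δ * (-(2*(t-y)) / (((t-y)^2+σ^2)^2))) t := by
    intro t
    have h := ((hG t).sub ((hasDerivAt_id t).const_mul ε)).sub
      ((barrier_hasDerivAt y σ t hσpos.ne').const_mul δ)
    simp only [hφdef, hBdef]
    exact h.congr_deriv (by ring)
  have hφdiff : Differentiable ℝ φ := fun t => (hφd t).differentiableAt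
  have hloc : IsLocalMin (fun t => w t - φ t) t0 := by
    have heq : (fun t => w t - φ t) = Ψ := by
      funext t; simp only [hΨdef, hφdef, hFdef, hBdef]; ring
    rw [heq]
    exact ht0min.isLocalMin (Icc_mem_nhds ht0I.1 ht0I.2)
  have ht0ab : t0 ∈ Ioo a b := ⟨hx.1.trans ht0I.1, ht0I.2.trans hy.2⟩
  have habs := hsuper t0 ht0ab φ hφdiff hloc
  rw [(hφd t0).deriv] at habs
  have hgEt0 : gE t0 = g t0 := hgE t0 ⟨ht0ab.1.le, ht0ab.2.le⟩
  rw [hgEt0] at habs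
  have hBdpos : 0 < -(2*(t0-y)) / (((t0-y)^2+σ^2)^2) := by
    apply div_pos (by linarith [ht0I.2]) (by positivity)
  set d : ℝ := g t0 - ε - δ * (-(2*(t0-y)) / (((t0-y)^2+σ^2)^2)) with hddef
  have hφd0 : HasDerivAt φ d t0 := by
    have := hφd t0
    rw [hgEt0] at this
    exact this
  rcases lt_or_ge d 0 with hneg | hpos
  · exact not_localMin_deriv_neg ht0I hloc hφd0 hneg hmono
  · rw [abs_of_nonneg hpos] at habs
    have : d < g t0 - ε := by
      have := mul_pos hδpos hBdpos
      rw [hddef]; linarith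
    linarith

lemma super_decr {a b : ℝ} {g w G gE : ℝ → ℝ}
    (hG : ∀ t, HasDerivAt G (gE t) t) (hgE : ∀ t ∈ Icc a b, gE t = g t)
    (hw : ContinuousOn w (Icc a b)) (hsuper : ViscositySupersolution a b g w)
    {x y : ℝ} (hx : x ∈ Ioo a b) (hy : y ∈ Ioo a b) (hxy : x < y)
    (hanti : AntitoneOn w (Icc x y)) :
    G y - G x ≤ w x - w y := by
  by_contra hcon
  push_neg at hcon
  have hyx : 0 < y - x := by linarith
  set ε : ℝ := ((G y - G x) - (w x - w y)) / (2*(y-x)) with hεdef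
  have hεpos : 0 < ε := div_pos (by linarith) (by linarith)
  obtain ⟨F, hFdef⟩ : ∃ F : ℝ → ℝ, F = fun t => w t + G t - ε * t := ⟨_, rfl⟩
  have hkey : ε * (y - x) = ((G y - G x) - (w x - w y)) / 2 := by
    rw [hεdef]; field_simp
  have hFxy : F x < F y := by
    simp only [hFdef]
    nlinarith [hkey]
  clear_value ε
  set m : ℝ := (F x + F y) / 2 with hmdef
  have hm1 : F x < m := by simp only [hmdef]; linarith
  have hm2 : m < F y := by simp only [hmdef]; linarith
  clear_value m
  have hGdiff : Differentiable ℝ G := fun t => (hG t).differentiableAt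
  have hGc : Continuous G := hGdiff.continuous
  have hwx : ContinuousAt w x := hw.continuousAt (Icc_mem_nhds hx.1 hx.2)
  have hFx : ContinuousAt F x := by
    rw [hFdef]
    exact (hwx.add hGc.continuousAt).sub ((continuous_const.mul continuous_id).continuousAt)
  obtain ⟨t1, ht1, hFt1⟩ := near_pt_right hFx isOpen_Iio hm1 hxy
  rw [mem_Iio] at hFt1
  have hxt1 : 0 < t1 - x := by linarith [ht1.1]
  set δ : ℝ := (m - F t1) * (t1 - x)^2 / 2 with hδdef
  have hδpos : 0 < δ := by
    apply div_pos (mul_pos (by linarith) (by positivity)) two_pos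
  have hδval : δ * ((t1 - x)^2)⁻¹ = (m - F t1) / 2 := by
    rw [hδdef]; field_simp
  clear_value δ
  set σ : ℝ := Real.sqrt (δ / (4*(m - F x))) with hσdef
  have hFxm : 0 < m - F x := by linarith
  have hσsq : σ^2 = δ / (4*(m - F x)) := by
    rw [hσdef, Real.sq_sqrt (le_of_lt (div_pos hδpos (by linarith)))]
  have hσpos : 0 < σ := Real.sqrt_pos.mpr (div_pos hδpos (by linarith))
  clear_value σ
  obtain ⟨B, hBdef⟩ : ∃ B : ℝ → ℝ, B = fun t => ((t - x)^2 + σ^2)⁻¹ := ⟨_, rfl⟩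
  have hBpos : ∀ t, 0 < B t := fun t => by
    simp only [hBdef]; positivity
  obtain ⟨Ψ, hΨdef⟩ : ∃ P : ℝ → ℝ, P = fun t => F t + δ * B t := ⟨_, rfl⟩
  have hΨy : m < Ψ y := by
    have := mul_pos hδpos (hBpos y)
    simp only [hΨdef]; linarith
  have hΨx : m < Ψ x := by
    have hBx : B x = (σ^2)⁻¹ := by simp [hBdef]
    have : δ * B x = 4*(m - F x) := by
      rw [hBx, hσsq]
      field_simp
    simp only [hΨdef]
    rw [this]; linarith
  have hΨt1 : Ψ t1 < m := by
    have hb1 : B t1 ≤ ((t1 - x)^2)⁻¹ := by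
      simp only [hBdef]
      apply inv_anti₀ (by positivity)
      nlinarith
    have hb2 : δ * B t1 ≤ δ * ((t1 - x)^2)⁻¹ :=
      mul_le_mul_of_nonneg_left hb1 hδpos.le
    simp only [hΨdef]
    rw [hδval] at hb2
    linarith
  have hIccsub : Icc x y ⊆ Icc a b := Icc_subset_Icc hx.1.le hy.2.le
  have hBc : Continuous B := by
    rw [hBdef]
    exact Continuous.inv₀ (((continuous_id.sub continuous_const).pow 2).add continuous_const)
      (fun t => by positivity)
  have hΨcont : ContinuousOn Ψ (Icc x y) := by
    simp only [hΨdef, hFdef]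
    exact (((hw.mono hIccsub).add hGc.continuousOn).sub
      ((continuous_const.mul continuous_id).continuousOn)).add
      ((continuous_const.mul hBc).continuousOn)
  obtain ⟨t0, ht0mem, ht0min⟩ := isCompact_Icc.exists_isMinOn (nonempty_Icc.mpr hxy.le) hΨcont
  have hmin1 : Ψ t0 < m := lt_of_le_of_lt (ht0min ⟨ht1.1.le, ht1.2.le⟩) hΨt1
  have ht0I : t0 ∈ Ioo x y := by
    rcases eq_or_lt_of_le ht0mem.1 with h | h
    · exfalso; rw [h] at hΨx; linarith
    rcases eq_or_lt_of_le ht0mem.2 with h2 | h2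
    · exfalso; rw [h2] at hmin1; linarith
    exact ⟨h, h2⟩
  obtain ⟨φ, hφdef⟩ : ∃ p : ℝ → ℝ, p = fun t => -G t + ε * t - δ * B t := ⟨_, rfl⟩
  have hφd : ∀ t, HasDerivAt φ (-(gE t) + ε - δ * (-(2*(t-x)) / (((t-x)^2+σ^2)^2))) t := by
    intro t
    have h := (((hG t).neg).add ((hasDerivAt_id t).const_mul ε)).sub
      ((barrier_hasDerivAt x σ t hσpos.ne').const_mul δ)
    simp only [hφdef, hBdef]
    exact h.congr_deriv (by ring)
  have hφdiff : Differentiable ℝ φ := fun t => (hφd t).differentiableAt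
  have hloc : IsLocalMin (fun t => w t - φ t) t0 := by
    have heq : (fun t => w t - φ t) = Ψ := by
      funext t; simp only [hΨdef, hφdef, hFdef, hBdef]; ring
    rw [heq]
    exact ht0min.isLocalMin (Icc_mem_nhds ht0I.1 ht0I.2)
  have ht0ab : t0 ∈ Ioo a b := ⟨hx.1.trans ht0I.1, ht0I.2.trans hy.2⟩
  have habs := hsuper t0 ht0ab φ hφdiff hloc
  rw [(hφd t0).deriv] at habs
  have hgEt0 : gE t0 = g t0 := hgE t0 ⟨ht0ab.1.le, ht0ab.2.le⟩
  rw [hgEt0] at habs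
  have hBdneg : -(2*(t0-x)) / (((t0-x)^2+σ^2)^2) < 0 := by
    apply div_neg_of_neg_of_pos (by linarith [ht0I.1]) (by positivity)
  set d : ℝ := -(g t0) + ε - δ * (-(2*(t0-x)) / (((t0-x)^2+σ^2)^2)) with hddef
  have hφd0 : HasDerivAt φ d t0 := by
    have := hφd t0
    rw [hgEt0] at this
    exact this
  rcases lt_or_ge 0 d with hposd | hnonpos
  · exact not_localMin_deriv_pos ht0I hloc hφd0 hposd hanti
  · rw [abs_of_nonpos hnonpos] at habs
    have : -(g t0) + ε < d := by
      have := mul_neg_of_pos_of_neg hδpos hBdneg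
      rw [hddef]; linarith
    linarith

end Aux

theorem solution_structure (a b : ℝ) (hab : a < b) (g w : ℝ → ℝ)
    (hg : ContinuousOn g (Set.Icc a b)) (hgpos : ∀ t ∈ Set.Icc a b, 0 < g t)
    (hw : ContinuousOn w (Set.Icc a b))
    (hsub : ViscositySubsolution a b g w) (hsuper : ViscositySupersolution a b g w) :
    ∃ tbar ∈ Set.Icc a b,
      (∀ t ∈ Set.Ioo a b, t < tbar → HasDerivAt w (g t) t) ∧
      (∀ t ∈ Set.Ioo a b, tbar < t → HasDerivAt w (-(g t)) t) ∧
      (∀ t1 ∈ Set.Ioo a b, ∀ t2 ∈ Set.Ioo a b,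
        ¬ DifferentiableAt ℝ w t1 → ¬ DifferentiableAt ℝ w t2 → t1 = t2) ∧
      (∀ᵐ t ∂(volume.restrict (Set.Ioo a b)), |deriv w t| = g t) := by
  -- the continuous extension of g and its antiderivative
  set gE : ℝ → ℝ := Set.IccExtend hab.le (fun t : Set.Icc a b => g t) with hgEdef
  have hgEc : Continuous gE := by
    rw [hgEdef]
    exact Continuous.Icc_extend' (continuousOn_iff_continuous_restrict.mp hg)
  have hgEeq : ∀ t ∈ Icc a b, gE t = g t := fun t ht => by
    rw [hgEdef, Set.IccExtend_of_mem hab.le _ ht]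
  set G : ℝ → ℝ := fun t => ∫ s in (a : ℝ)..t, gE s with hGdef
  have hGd : ∀ t, HasDerivAt G (gE t) t := fun t =>
    (hgEc.integral_hasStrictDerivAt a t).hasDerivAt
  -- no interior local minimum
  have hnomin : ∀ t0 ∈ Ioo a b, IsLocalMin w t0 → False := by
    intro t0 ht0 hmin
    have h := hsuper t0 ht0 (fun _ => 0) (differentiable_const 0)
      (by simpa using hmin)
    rw [deriv_const] at h
    simp only [abs_zero] at h
    linarith [hgpos t0 ⟨ht0.1.le, ht0.2.le⟩]
  -- maximum point
  obtain ⟨tbar, htbar, htmax⟩ := isCompact_Icc.exists_isMaxOn (nonempty_Icc.mpr hab.le) hw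
  -- monotone on the left of tbar
  have hmonoL : MonotoneOn w (Icc a tbar) := by
    intro u hu v hv huv
    rcases eq_or_lt_of_le huv with rfl | hlt
    · exact le_refl _
    obtain ⟨mm, hmm, hmmin⟩ := isCompact_Icc.exists_isMinOn (nonempty_Icc.mpr (hu.2 : u ≤ tbar))
      (hw.mono (Icc_subset_Icc hu.1 htbar.2))
    rcases eq_or_lt_of_le hmm.1 with h1 | h1
    · rw [h1]
      exact hmmin ⟨hlt.le, hv.2⟩
    rcases eq_or_lt_of_le hmm.2 with h2 | h2
    · have hwu : w u ≤ w tbar := htmax ⟨hu.1, hu.2.trans htbar.2⟩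
      have hwmu : w mm ≤ w u := hmmin ⟨le_refl u, hu.2⟩
      rw [h2] at hwmu
      have : w u = w mm := by rw [h2]; linarith
      rw [this]
      exact hmmin ⟨hlt.le, hv.2⟩
    · exfalso
      apply hnomin mm ⟨lt_of_le_of_lt hu.1 h1, lt_of_lt_of_le h2 htbar.2⟩
      exact hmmin.isLocalMin (Icc_mem_nhds h1 h2)
  -- antitone on the right of tbar
  have hmonoR : AntitoneOn w (Icc tbar b) := by
    intro u hu v hv huv
    rcases eq_or_lt_of_le huv with rfl | hlt
    · exact le_refl _
    obtain ⟨mm, hmm, hmmin⟩ := isCompact_Icc.exists_isMinOn (nonempty_Icc.mpr (hv.1 : tbar ≤ v))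
      (hw.mono (Icc_subset_Icc htbar.1 hv.2))
    rcases eq_or_lt_of_le hmm.2 with h2 | h2
    · rw [← h2]
      exact hmmin ⟨hu.1, hlt.le⟩
    rcases eq_or_lt_of_le hmm.1 with h1 | h1
    · have hwv : w v ≤ w tbar := htmax ⟨htbar.1.trans hv.1, hv.2⟩
      have hwmv : w mm ≤ w v := hmmin ⟨hv.1, le_refl v⟩
      rw [← h1] at hwmv
      have : w v = w mm := by rw [← h1]; linarith
      rw [this]
      exact hmmin ⟨hu.1, hlt.le⟩
    · exfalso
      apply hnomin mm ⟨lt_of_le_of_lt htbar.1 h1, lt_of_lt_of_le h2 hv.2⟩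
      exact hmmin.isLocalMin (Icc_mem_nhds h1 h2)
  -- equalities on each side
  have hIncr : ∀ x y : ℝ, x ∈ Ioo a b → y ∈ Ioo a b → x < y → y ≤ tbar →
      w y - w x = G y - G x := by
    intro x y hx hy hxy hyt
    have hmono : MonotoneOn w (Icc x y) :=
      hmonoL.mono (Icc_subset_Icc hx.1.le hyt)
    exact le_antisymm (sub_upper hGd hgEeq hw hsub hx hy hxy)
      (super_incr hGd hgEeq hw hsuper hx hy hxy hmono)
  have hDecr : ∀ x y : ℝ, x ∈ Ioo a b → y ∈ Ioo a b → x < y → tbar ≤ x →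
      w x - w y = G y - G x := by
    intro x y hx hy hxy hxt
    have hanti : AntitoneOn w (Icc x y) :=
      hmonoR.mono (Icc_subset_Icc hxt hy.2.le)
    exact le_antisymm (sub_lower hGd hgEeq hw hsub hx hy hxy)
      (super_decr hGd hgEeq hw hsuper hx hy hxy hanti)
  -- derivative on the left
  have hDerL : ∀ t ∈ Ioo a b, t < tbar → HasDerivAt w (g t) t := by
    intro t ht htlt
    have htr : t < min tbar b := lt_min htlt ht.2
    have hU : Ioo a (min tbar b) ∈ 𝓝 t := Ioo_mem_nhds ht.1 htr
    have hEq : ∀ s ∈ Ioo a (min tbar b), w s = (w t - G t) + G s := by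
      intro s hs
      have hsab : s ∈ Ioo a b := ⟨hs.1, lt_of_lt_of_le hs.2 (min_le_right _ _)⟩
      have hst : s < tbar ∨ True := Or.inr trivial
      rcases lt_trichotomy s t with h | h | h
      · have := hIncr s t hsab ht h htlt.le
        linarith
      · rw [h]; ring
      · have := hIncr t s ht hsab h (le_of_lt (lt_of_lt_of_le hs.2 (min_le_left _ _)))
        linarith
    have hG' : HasDerivAt (fun s => (w t - G t) + G s) (gE t) t := (hGd t).const_add _
    rw [hgEeq t ⟨ht.1.le, ht.2.le⟩] at hG'
    exact hG'.congr_of_eventuallyEq (eventuallyEq_of_mem hU hEq)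
  -- derivative on the right
  have hDerR : ∀ t ∈ Ioo a b, tbar < t → HasDerivAt w (-(g t)) t := by
    intro t ht htgt
    have htr : max tbar a < t := max_lt htgt ht.1
    have hU : Ioo (max tbar a) b ∈ 𝓝 t := Ioo_mem_nhds htr ht.2
    have hEq : ∀ s ∈ Ioo (max tbar a) b, w s = (w t + G t) - G s := by
      intro s hs
      have hsab : s ∈ Ioo a b := ⟨lt_of_le_of_lt (le_max_right _ _) hs.1, hs.2⟩
      rcases lt_trichotomy s t with h | h | h
      · have := hDecr s t hsab ht h (le_of_lt (lt_of_le_of_lt (le_max_left _ _) hs.1))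
        linarith
      · rw [h]; ring
      · have := hDecr t s ht hsab h htgt.le
        linarith
    have hG' : HasDerivAt (fun s => (w t + G t) - G s) (-(gE t)) t := (hGd t).const_sub _
    rw [hgEeq t ⟨ht.1.le, ht.2.le⟩] at hG'
    exact hG'.congr_of_eventuallyEq (eventuallyEq_of_mem hU hEq)
  refine ⟨tbar, htbar, hDerL, hDerR, ?_, ?_⟩
  · intro t1 h1 t2 h2 hd1 hd2
    have e1 : t1 = tbar := by
      by_contra hne
      rcases lt_or_gt_of_ne hne with h | h
      · exact hd1 (hDerL t1 h1 h).differentiableAt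
      · exact hd1 (hDerR t1 h1 h).differentiableAt
    have e2 : t2 = tbar := by
      by_contra hne
      rcases lt_or_gt_of_ne hne with h | h
      · exact hd2 (hDerL t2 h2 h).differentiableAt
      · exact hd2 (hDerR t2 h2 h).differentiableAt
    rw [e1, e2]
  · rw [ae_restrict_iff' measurableSet_Ioo]
    have hsubset : {t : ℝ | ¬ (t ∈ Ioo a b → |deriv w t| = g t)} ⊆ {tbar} := by
      intro t ht
      simp only [mem_setOf_eq, _root_.not_imp] at ht
      obtain ⟨htI, hne⟩ := ht
      simp only [mem_singleton_iff]
      by_contra hnet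
      rcases lt_or_gt_of_ne hnet with h | h
      · apply hne
        rw [(hDerL t htI h).deriv]
        exact abs_of_pos (hgpos t ⟨htI.1.le, htI.2.le⟩)
      · apply hne
        rw [(hDerR t htI h).deriv, abs_neg]
        exact abs_of_pos (hgpos t ⟨htI.1.le, htI.2.le⟩)
    exact ae_iff.mpr (measure_mono_null hsubset (measure_singleton tbar))
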